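/- Let f : ℕ → ℂ be multiplicative with |f(n)| ≤ 1 for all n. Suppose f(2^k) = −1 for all k ≥ 1 and there exists M such that f(p^k) = f(p^{k−1}) for all prime powers p^k ≥ M. Then there exists an integer m ≥ 1 with f(n + m) = f(n) for all n ≥ 1 and ∑_{n=1}^m f(n) = 0. -/

import Mathlib

open Finset

theorem structure_implies_periodic_zero_mean
    (f : ℕ → ℂ) (hf1 : f 1 = 1)
    (hfmul : ∀ m n, Nat.Coprime m n → f (m * n) = f m * f n)
    (hfb : ∀ n, ‖f n‖ ≤ 1)
    (h2 : ∀ k : ℕ, 1 ≤ k → f (2 ^ k) = -1)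
    (hM : ∃ M : ℕ, ∀ p k : ℕ, p.Prime → 1 ≤ k → M ≤ p ^ k → f (p ^ k) = f (p ^ (k - 1))) :
    ∃ m : ℕ, 1 ≤ m ∧ (∀ n : ℕ, 1 ≤ n → f (n + m) = f n) ∧
      ∑ n ∈ Finset.Icc 1 m, f n = 0 := by
  obtain ⟨M, hM⟩ := hM
  set N : ℕ := max M 2 with hN
  have hMN : M ≤ N := le_max_left _ _
  have hN2 : 2 ≤ N := le_max_right _ _
  set P : Finset ℕ := Nat.primesBelow (N + 1) with hP
  set m : ℕ := ∏ p ∈ P, p ^ N with hm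
  -- basic facts about m
  have hprimeP : ∀ p ∈ P, p.Prime := fun p hp => (Nat.mem_primesBelow.mp hp).2
  have hpowdvd : ∀ p ∈ P, p ^ N ∣ m := fun p hp => Finset.dvd_prod_of_mem _ hp
  have hm1 : 1 ≤ m := by
    rw [hm]
    exact Finset.one_le_prod' fun p hp => Nat.one_le_pow _ _ (hprimeP p hp).pos
  have h2P : (2 : ℕ) ∈ P := Nat.mem_primesBelow.mpr ⟨by omega, Nat.prime_two⟩
  have h2m : 2 ∣ m := dvd_trans (dvd_pow_self 2 (by omega : N ≠ 0)) (hpowdvd 2 h2P)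
  -- big primes: f (p^k) = 1
  have hbig : ∀ p : ℕ, p.Prime → M ≤ p → ∀ k : ℕ, f (p ^ k) = 1 := by
    intro p hp hMp k
    induction k with
    | zero => simpa using hf1
    | succ k ih =>
      rw [hM p (k + 1) hp (by omega)
        (le_trans hMp (Nat.le_self_pow (by omega) p))]
      simpa using ih
  -- stabilization: f (p^k) = f (p^N) for k ≥ N
  have hstab : ∀ p : ℕ, p.Prime → ∀ j : ℕ, f (p ^ (N + j)) = f (p ^ N) := by
    intro p hp j
    induction j with
    | zero => rfl
    | succ j ih =>
      have hMle : M ≤ p ^ (N + j + 1) := by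
        calc M ≤ N := hMN
        _ ≤ 2 ^ N := (Nat.lt_two_pow_self (n := N)).le
        _ ≤ p ^ (N + j + 1) :=
          Nat.pow_le_pow_left hp.two_le N |>.trans (Nat.pow_le_pow_right hp.pos (by omega))
      have := hM p (N + j + 1) hp (by omega) hMle
      rw [← Nat.add_assoc]
      simpa [Nat.add_sub_cancel] using this.trans (by simpa [Nat.add_assoc] using ih)
  have hminstab : ∀ p : ℕ, p.Prime → ∀ k : ℕ, f (p ^ k) = f (p ^ min k N) := by
    intro p hp k
    rcases le_or_gt k N with h | h
    · rw [min_eq_left h]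
    · rw [min_eq_right h.le, show k = N + (k - N) by omega, hstab p hp]
  -- key representation
  have key : ∀ n : ℕ, 1 ≤ n →
      f n = ∏ p ∈ P, f (p ^ min (n.factorization p) N) := by
    intro n hn
    have hn0 : n ≠ 0 := by omega
    rw [Nat.multiplicative_factorization f hfmul hf1 hn0]
    rw [Finsupp.prod, Nat.support_factorization]
    have step1 : ∏ p ∈ n.primeFactors, f (p ^ n.factorization p)
        = ∏ p ∈ n.primeFactors, f (p ^ min (n.factorization p) N) := by
      refine Finset.prod_congr rfl fun p hp => ?_
      exact hminstab p (Nat.prime_of_mem_primeFactors hp) _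
    rw [step1]
    have step2 : ∏ p ∈ n.primeFactors, f (p ^ min (n.factorization p) N)
        = ∏ p ∈ n.primeFactors ∪ P, f (p ^ min (n.factorization p) N) := by
      refine Finset.prod_subset (Finset.subset_union_left : n.primeFactors ⊆ n.primeFactors ∪ P) fun p hpu hpn => ?_
      have hpP : p ∈ P := (Finset.mem_union.mp hpu).resolve_left hpn
      have : n.factorization p = 0 := by
        by_contra h
        exact hpn (Nat.support_factorization n ▸ Finsupp.mem_support_iff.mpr h)
      simp [this, hf1]
    rw [step2]
    refine (Finset.prod_subset (Finset.subset_union_right : P ⊆ n.primeFactors ∪ P) fun p hpu hpP => ?_).symm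
    have hpn : p ∈ n.primeFactors := (Finset.mem_union.mp hpu).resolve_right hpP
    have hp : p.Prime := Nat.prime_of_mem_primeFactors hpn
    have hNp : N + 1 ≤ p := by
      by_contra h
      exact hpP (Nat.mem_primesBelow.mpr ⟨by omega, hp⟩)
    exact hbig p hp (by omega) _
  -- periodicity
  have hper : ∀ n : ℕ, 1 ≤ n → f (n + m) = f n := by
    intro n hn
    rw [key n hn, key (n + m) (by omega)]
    refine Finset.prod_congr rfl fun p hpP => ?_
    have hp : p.Prime := hprimeP p hpP
    have hn0 : n ≠ 0 := by omega
    have hnm0 : n + m ≠ 0 := by omega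
    congr 2
    have hA : min ((n + m).factorization p) N ≤ min (n.factorization p) N := by
      set t := min ((n + m).factorization p) N with ht
      have hdm : p ^ t ∣ m := dvd_trans (pow_dvd_pow p (min_le_right _ _)) (hpowdvd p hpP)
      have hdnm : p ^ t ∣ n + m := (Nat.Prime.pow_dvd_iff_le_factorization hp hnm0).mpr
        (min_le_left _ _)
      have hdn : p ^ t ∣ n := by
        have := Nat.dvd_sub hdnm hdm
        simpa using this
      exact le_min ((Nat.Prime.pow_dvd_iff_le_factorization hp hn0).mp hdn) (min_le_right _ _)
    have hB : min (n.factorization p) N ≤ min ((n + m).factorization p) N := by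
      set t := min (n.factorization p) N with ht
      have hdm : p ^ t ∣ m := dvd_trans (pow_dvd_pow p (min_le_right _ _)) (hpowdvd p hpP)
      have hdn : p ^ t ∣ n := (Nat.Prime.pow_dvd_iff_le_factorization hp hn0).mpr
        (min_le_left _ _)
      exact le_min ((Nat.Prime.pow_dvd_iff_le_factorization hp hnm0).mp (Nat.dvd_add hdn hdm))
        (min_le_right _ _)
    exact le_antisymm hA hB
  refine ⟨m, hm1, hper, ?_⟩
  -- now the sum
  have hIcc : ∀ k : ℕ, Finset.Icc 1 k = Finset.Ioc 0 k := fun k => Finset.Icc_add_one_left_eq_Ioc 0 k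
  rw [hIcc]
  set S : ℂ := ∑ n ∈ Finset.Ioc 0 m, f n with hS
  -- doubling helper
  have helper : ∀ g : ℕ → ℂ, (∀ n : ℕ, 1 ≤ n → g (n + m) = g n) →
      ∑ n ∈ Finset.Ioc 0 (2 * m), g n = 2 * ∑ n ∈ Finset.Ioc 0 m, g n := by
    intro g hg
    have hsplit := Finset.sum_Ioc_consecutive g (Nat.zero_le m) (by omega : m ≤ 2 * m)
    have hmap : ∑ n ∈ Finset.Ioc m (2 * m), g n = ∑ n ∈ Finset.Ioc 0 m, g (n + m) := by
      rw [show 2 * m = m + m by ring, show (Finset.Ioc m (m + m)) =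
        (Finset.Ioc 0 m).map (addRightEmbedding m) by simp, Finset.sum_map]
      rfl
    have hcongr : ∑ n ∈ Finset.Ioc 0 m, g (n + m) = ∑ n ∈ Finset.Ioc 0 m, g n :=
      Finset.sum_congr rfl fun n hn => hg n (Finset.mem_Ioc.mp hn).1
    rw [← hsplit, hmap, hcongr]; ring
  -- f(2n) for odd and even n
  have hf2 : f 2 = -1 := by simpa using h2 1 le_rfl
  have hodd : ∀ n : ℕ, ¬ Even n → f (2 * n) = - f n := by
    intro n hn
    rw [hfmul 2 n (Nat.coprime_two_left.mpr (Nat.not_even_iff_odd.mp hn)), hf2]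
    ring
  have heven : ∀ n : ℕ, 1 ≤ n → Even n → f (2 * n) = f n := by
    intro n hn hne
    have hn0 : n ≠ 0 := by omega
    set a : ℕ := n.factorization 2 with ha
    set b : ℕ := n / 2 ^ a with hb
    have hnab : 2 ^ a * b = n := Nat.ordProj_mul_ordCompl_eq_self n 2
    have hcop : Nat.Coprime 2 b := Nat.coprime_ordCompl Nat.prime_two hn0
    have ha1 : 1 ≤ a := Nat.Prime.factorization_pos_of_dvd Nat.prime_two hn0
      (even_iff_two_dvd.mp hne)
    have h1 : f n = - f b := by
      rw [← hnab, hfmul _ _ (Nat.Coprime.pow_left a hcop), h2 a ha1]; ring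
    have h2n : f (2 * n) = - f b := by
      rw [← hnab, show 2 * (2 ^ a * b) = 2 ^ (a + 1) * b by ring,
        hfmul _ _ (Nat.Coprime.pow_left (a + 1) hcop), h2 (a + 1) (by omega)]; ring
    rw [h1, h2n]
  -- even part of the doubled sum
  have heq3 : ∑ n ∈ (Finset.Ioc 0 (2 * m)).filter (fun n => Even n), f n
      = ∑ n ∈ Finset.Ioc 0 m, f (2 * n) := by
    refine Finset.sum_nbij' (fun n => n / 2) (fun n => 2 * n) ?_ ?_ ?_ ?_ ?_
    · intro n hn
      simp only [Finset.mem_filter, Finset.mem_Ioc] at hn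
      obtain ⟨⟨h1, h3⟩, c, hc⟩ := hn
      simp only [Finset.mem_Ioc]
      omega
    · intro n hn
      simp only [Finset.mem_Ioc] at hn
      simp only [Finset.mem_filter, Finset.mem_Ioc]
      exact ⟨⟨by omega, by omega⟩, ⟨n, by ring⟩⟩
    · intro n hn
      simp only [Finset.mem_filter, Finset.mem_Ioc] at hn
      obtain ⟨-, c, hc⟩ := hn
      show 2 * (n / 2) = n
      omega
    · intro n hn
      show (2 * n) / 2 = n
      omega
    · intro n hn
      simp only [Finset.mem_filter, Finset.mem_Ioc] at hn
      obtain ⟨-, c, hc⟩ := hn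
      show f n = f (2 * (n / 2))
      congr 1
      omega
  -- value of the image sum
  have heq4 : ∑ n ∈ Finset.Ioc 0 m, f (2 * n)
      = S - 2 * ∑ n ∈ (Finset.Ioc 0 m).filter (fun n => ¬ Even n), f n := by
    have : ∑ n ∈ Finset.Ioc 0 m, f (2 * n)
        = ∑ n ∈ Finset.Ioc 0 m, (f n - (if ¬ Even n then 2 * f n else 0)) := by
      refine Finset.sum_congr rfl fun n hn => ?_
      have hn1 : 1 ≤ n := (Finset.mem_Ioc.mp hn).1
      by_cases he : Even n
      · simp [he, heven n hn1 he]
      · simp only [he, not_false_iff, if_true]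
        rw [hodd n he]; ring
    rw [this, Finset.sum_sub_distrib, ← hS, ← Finset.sum_filter, Finset.mul_sum]
  -- combine
  have hdouble : ∑ n ∈ Finset.Ioc 0 (2 * m), f n = 2 * S := helper f hper
  have hoddpart : ∑ n ∈ (Finset.Ioc 0 (2 * m)).filter (fun n => ¬ Even n), f n
      = 2 * ∑ n ∈ (Finset.Ioc 0 m).filter (fun n => ¬ Even n), f n := by
    rw [Finset.sum_filter, Finset.sum_filter]
    refine helper (fun n => if ¬ Even n then f n else 0) fun n hn => ?_
    have : Even (n + m) ↔ Even n := by
      constructor <;> intro h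
      · rcases h2m with ⟨c, hc⟩
        rcases h with ⟨d, hd⟩
        exact ⟨d - c, by omega⟩
      · exact h.add (even_iff_two_dvd.mpr h2m)
    by_cases he : Even n
    · simp [he, this.mpr he]
    · simp only [he, this, not_false_iff, if_true]
      exact hper n hn
  have hparts := Finset.sum_filter_add_sum_filter_not (Finset.Ioc 0 (2 * m))
    (fun n => Even n) f
  rw [hdouble, heq3, heq4, hoddpart] at hparts
  -- 2S = (S - 2U) + 2U
  have : S = 0 := by linear_combination -hparts
  exact this
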